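/- A subspace C ≤ V ⊕ V* is n-dimensional with the canonical pairing positive definite on C if and only if there exist a (unique) positive definite symmetric bilinear form g on V and a (unique) alternating bilinear form b on V such that C is the graph of b + g, i.e. C = { x ⊕ (b(x,·) + g(x,·)) : x ∈ V }. -/

import Mathlib

/-- The canonical pairing on `V ⊕ V*`:  `⟨x ⊕ ξ, y ⊕ η⟩ = ½(ξ(y) + η(x))`. -/
noncomputable def canonicalPairing (V : Type*) [AddCommGroup V] [Module ℝ V]
    (u v : V × Module.Dual ℝ V) : ℝ :=
  (u.2 v.1 + v.2 u.1) / 2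

/-- A subspace `C ≤ V ⊕ V*` is `n`-dimensional and positive definite for the canonical
pairing iff it is the graph of `b + g` for a unique pair `(g, b)` of a positive definite
symmetric bilinear form `g` and an alternating bilinear form `b` on `V`. -/
theorem posDef_subspace_iff_graph (V : Type*) [AddCommGroup V] [Module ℝ V]
    [FiniteDimensional ℝ V] (n : ℕ) (hn : Module.finrank ℝ V = n)
    (C : Submodule ℝ (V × Module.Dual ℝ V)) :
    (Module.finrank ℝ C = n ∧ ∀ u ∈ C, u ≠ 0 → 0 < canonicalPairing V u u) ↔
    ∃! gb : LinearMap.BilinForm ℝ V × LinearMap.BilinForm ℝ V,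
      (∀ x y : V, gb.1 x y = gb.1 y x) ∧
      (∀ x : V, x ≠ 0 → 0 < gb.1 x x) ∧
      (∀ x : V, gb.2 x x = 0) ∧
      (↑C : Set (V × Module.Dual ℝ V)) = {p | ∃ x : V, p = (x, gb.2 x + gb.1 x)} := by
  constructor
  · rintro ⟨hdim, hpos⟩
    -- the first projection restricted to C is injective
    set p1 : C →ₗ[ℝ] V := (LinearMap.fst ℝ V (Module.Dual ℝ V)).comp C.subtype with hp1
    have hker : ∀ c : C, (c : V × Module.Dual ℝ V).1 = 0 → c = 0 := by
      intro c hc1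
      by_contra hne
      have hcne : (c : V × Module.Dual ℝ V) ≠ 0 := by
        simpa using hne
      have hlt := hpos _ c.2 hcne
      rw [canonicalPairing, hc1] at hlt
      simp at hlt
    have hinj : Function.Injective p1 := by
      intro c d h
      have h1 : (c : V × Module.Dual ℝ V).1 = (d : V × Module.Dual ℝ V).1 := h
      have h2 : ((c - d : C) : V × Module.Dual ℝ V).1 = 0 := by
        simp [h1]
      have := hker (c - d) h2
      exact sub_eq_zero.mp this
    have hfr : Module.finrank ℝ C = Module.finrank ℝ V := by rw [hdim, hn]
    have hsurj : Function.Surjective p1 :=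
      (LinearMap.injective_iff_surjective_of_finrank_eq_finrank (K := ℝ) (V := C) (V₂ := V) (f := p1) hfr).mp hinj
    let e : C ≃ₗ[ℝ] V := LinearEquiv.ofBijective p1 ⟨hinj, hsurj⟩
    let A : V →ₗ[ℝ] Module.Dual ℝ V :=
      ((LinearMap.snd ℝ V (Module.Dual ℝ V)).comp C.subtype).comp (e.symm : V →ₗ[ℝ] C)
    have hco : ∀ x : V, ((e.symm x : C) : V × Module.Dual ℝ V) = (x, A x) := by
      intro x
      have h1 : ((e.symm x : C) : V × Module.Dual ℝ V).1 = x := e.apply_symm_apply x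
      exact Prod.ext h1 rfl
    have hmem : ∀ x : V, (x, A x) ∈ C := by
      intro x
      rw [← hco x]; exact (e.symm x).2
    have hchar : ∀ u : V × Module.Dual ℝ V, u ∈ C → u = (u.1, A u.1) := by
      intro u hu
      have he : e ⟨u, hu⟩ = u.1 := rfl
      have := hco u.1
      rw [← he, e.symm_apply_apply] at this
      exact this
    -- split A into symmetric and alternating parts
    set g : LinearMap.BilinForm ℝ V := (2⁻¹ : ℝ) • (A + A.flip) with hg
    set b : LinearMap.BilinForm ℝ V := (2⁻¹ : ℝ) • (A - A.flip) with hb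
    have hgval : ∀ x y, g x y = (A x y + A y x) / 2 := by
      intro x y; simp [hg, LinearMap.flip_apply]; ring
    have hbval : ∀ x y, b x y = (A x y - A y x) / 2 := by
      intro x y; simp [hb, LinearMap.flip_apply]; ring
    have hBG : ∀ x : V, b x + g x = A x := by
      intro x
      ext y
      simp only [LinearMap.add_apply]
      rw [hgval, hbval]; ring
    refine ⟨(g, b), ⟨?_, ?_, ?_, ?_⟩, ?_⟩
    · intro x y; rw [hgval, hgval]; ring
    · intro x hx
      have hne : ((x, A x) : V × Module.Dual ℝ V) ≠ 0 := by
        intro h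
        exact hx (congrArg Prod.fst h)
      have := hpos _ (hmem x) hne
      rw [canonicalPairing] at this
      rw [hgval]
      simpa using this
    · intro x; rw [hbval]; ring
    · ext u
      constructor
      · intro hu
        exact ⟨u.1, by rw [hBG]; exact hchar u hu⟩
      · rintro ⟨x, rfl⟩
        rw [hBG]; exact hmem x
    · rintro ⟨g', b'⟩ ⟨hsym', hpos', halt', hset'⟩
      have hanti : ∀ x y, b' y x = -b' x y := by
        intro x y
        have h := halt' (x + y)
        simp only [map_add, LinearMap.add_apply, halt'] at h
        linarith
      have hA' : ∀ x : V, b' x + g' x = A x := by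
        intro x
        have h1 : ((x, A x) : V × Module.Dual ℝ V) ∈
            {p : V × Module.Dual ℝ V | ∃ y : V, p = (y, b' y + g' y)} := by
          rw [← hset']; exact hmem x
        obtain ⟨y, hy⟩ := h1
        have hxy : x = y := congrArg Prod.fst hy
        subst hxy
        exact (congrArg Prod.snd hy).symm
      have hA'' : ∀ x y : V, b' x y + g' x y = A x y := by
        intro x y
        have := congrFun (congrArg (fun f => f.toFun) (hA' x)) y
        simpa using this
      have hg' : g' = g := by
        ext x y
        rw [hgval]
        have h1 := hA'' x y
        have h2 := hA'' y x
        rw [hanti x y, hsym' y x] at h2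
        linarith
      have hb' : b' = b := by
        ext x y
        rw [hbval]
        have h1 := hA'' x y
        have h2 := hA'' y x
        rw [hanti x y, hsym' y x] at h2
        linarith
      exact Prod.ext hg' hb'
  · rintro ⟨⟨g, b⟩, ⟨hsym, hposg, halt, hset⟩, -⟩
    set L : V →ₗ[ℝ] V × Module.Dual ℝ V := LinearMap.prod LinearMap.id (b + g) with hL
    have hinjL : Function.Injective L := by
      intro x y h
      exact congrArg Prod.fst h
    have hC : C = LinearMap.range L := by
      ext u
      rw [LinearMap.mem_range]
      constructor
      · intro hu
        have : u ∈ (↑C : Set (V × Module.Dual ℝ V)) := hu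
        rw [hset] at this
        obtain ⟨x, rfl⟩ := this
        exact ⟨x, rfl⟩
      · rintro ⟨x, rfl⟩
        have : ((x, b x + g x) : V × Module.Dual ℝ V) ∈ (↑C : Set (V × Module.Dual ℝ V)) := by
          rw [hset]; exact ⟨x, rfl⟩
        exact this
    constructor
    · rw [hC, LinearMap.finrank_range_of_inj hinjL, hn]
    · intro u hu hune
      have : u ∈ (↑C : Set (V × Module.Dual ℝ V)) := hu
      rw [hset] at this
      obtain ⟨x, rfl⟩ := this
      have hx : x ≠ 0 := by
        rintro rfl
        apply hune
        simp
      have hgx := hposg x hx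
      rw [canonicalPairing]
      simp only [LinearMap.add_apply, halt x, zero_add]
      linarith
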